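/- Let G be a countable group, and for each i in a countable index set I let g_i : G → ℝ be a nonnegative bounded function and s_i ∈ G, such that ∑_{i ∈ I} g_i(r)² ≤ 1 for all r ∈ G. Define for ξ ∈ ℓ²(G) the function (Tξ)(r) = ∑_{i ∈ I} g_i(r) c_i(r) g_i'(r) ξ(s_i t⁻¹ s_i⁻¹ r), where t ∈ G is fixed, c_i : G → ℂ satisfies |c_i(r)| ≤ C for all i, r, and g_i'(r) = g_i(s_i t⁻¹ s_i⁻¹ r). Then ‖Tξ‖₂ ≤ C · ‖T'|ξ|‖₂, where (T'η)(r) = ∑_{i ∈ I} g_i(r) g_i'(r) η(s_i t⁻¹ s_i⁻¹ r) and |ξ|(r) = |ξ(r)|. -/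

import Mathlib

open scoped NNReal ENNReal

theorem l2_domination_estimate
    {G : Type*} [Group G] [Countable G]
    {I : Type*} [Countable I]
    (g : I → G → ℝ) (s : I → G) (t : G)
    (hg : ∀ i r, 0 ≤ g i r)
    (hgb : ∀ i, ∃ M : ℝ, ∀ r, g i r ≤ M)
    (hsummable : ∀ r : G, Summable fun i => (g i r) ^ 2)
    (hsum : ∀ r : G, ∑' i, (g i r) ^ 2 ≤ 1)
    (c : I → G → ℂ) (C : ℝ) (hC : 0 ≤ C) (hc : ∀ i r, ‖c i r‖ ≤ C)
    (ξ : G → ℂ) (hξ : Summable fun r => ‖ξ r‖ ^ 2) :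
    Real.sqrt (∑' r : G,
        ‖∑' i, (g i r : ℂ) * c i r * (g i (s i * t⁻¹ * (s i)⁻¹ * r) : ℂ) *
            ξ (s i * t⁻¹ * (s i)⁻¹ * r)‖ ^ 2)
      ≤ C * Real.sqrt (∑' r : G,
        (∑' i, g i r * g i (s i * t⁻¹ * (s i)⁻¹ * r) *
            ‖ξ (s i * t⁻¹ * (s i)⁻¹ * r)‖) ^ 2) := by
  classical
  set σ : I → G := fun i => s i * t⁻¹ * (s i)⁻¹ with hσ
  -- nonneg real data as ℝ≥0
  set a : I → G → ℝ≥0 := fun i r => ⟨g i r, hg i r⟩ with ha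
  set x : G → ℝ≥0 := fun u => ‖ξ u‖₊ with hx
  have hacoe : ∀ i r, ((a i r : ℝ≥0) : ℝ) = g i r := fun i r => rfl
  have hxcoe : ∀ u, ((x u : ℝ≥0) : ℝ) = ‖ξ u‖ := fun u => rfl
  -- summability of squares in ℝ≥0
  have ha2 : ∀ r, Summable fun i => (a i r) ^ 2 := by
    intro r
    rw [← NNReal.summable_coe]
    simpa only [NNReal.coe_pow, hacoe] using hsummable r
  have hx2 : Summable fun u => (x u) ^ 2 := by
    rw [← NNReal.summable_coe]
    simpa only [NNReal.coe_pow, hxcoe] using hξ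
  have ha2sum : ∀ r, ∑' i, (a i r) ^ 2 ≤ 1 := by
    intro r
    rw [← NNReal.coe_le_coe, NNReal.coe_tsum]
    calc ∑' i, ((a i r ^ 2 : ℝ≥0) : ℝ) = ∑' i, (g i r) ^ 2 :=
          tsum_congr fun i => by rw [NNReal.coe_pow, hacoe]
      _ ≤ 1 := hsum r
  -- ENNReal global finiteness
  have hcoe_sq : ∀ (y : ℝ≥0), ((y ^ 2 : ℝ≥0) : ℝ≥0∞) = (y : ℝ≥0∞) ^ 2 := by
    intro y; exact ENNReal.coe_pow y 2
  have ha2E : ∀ u, ∑' i, ((a i u : ℝ≥0∞)) ^ 2 ≤ 1 := by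
    intro u
    have : ∑' i, ((a i u : ℝ≥0∞)) ^ 2 = ((∑' i, (a i u) ^ 2 : ℝ≥0) : ℝ≥0∞) := by
      rw [ENNReal.coe_tsum (ha2 u)]
      exact tsum_congr fun i => (hcoe_sq _).symm
    rw [this]
    exact_mod_cast ha2sum u
  set T : ℝ≥0∞ := ∑' (r : G), ∑' (i : I), ((a i (σ i * r) * x (σ i * r) : ℝ≥0) : ℝ≥0∞) ^ 2
    with hT
  have hTtop : T ≠ ⊤ := by
    have hcalc : T ≤ ∑' u, ((x u : ℝ≥0∞)) ^ 2 := by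
      calc T = ∑' (i : I), ∑' (r : G), ((a i (σ i * r) * x (σ i * r) : ℝ≥0) : ℝ≥0∞) ^ 2 :=
            ENNReal.tsum_comm
        _ = ∑' (i : I), ∑' (u : G), ((a i u * x u : ℝ≥0) : ℝ≥0∞) ^ 2 := by
            refine tsum_congr fun i => ?_
            exact Equiv.tsum_eq (Equiv.mulLeft (σ i))
              (fun u => ((a i u * x u : ℝ≥0) : ℝ≥0∞) ^ 2)
        _ = ∑' (u : G), ∑' (i : I), ((a i u : ℝ≥0∞)) ^ 2 * ((x u : ℝ≥0∞)) ^ 2 := by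
            rw [ENNReal.tsum_comm]
            refine tsum_congr fun u => tsum_congr fun i => ?_
            push_cast; ring
        _ = ∑' (u : G), (∑' (i : I), ((a i u : ℝ≥0∞)) ^ 2) * ((x u : ℝ≥0∞)) ^ 2 := by
            refine tsum_congr fun u => ?_
            exact ENNReal.tsum_mul_right
        _ ≤ ∑' (u : G), 1 * ((x u : ℝ≥0∞)) ^ 2 :=
            ENNReal.tsum_le_tsum fun u => mul_le_mul_left (ha2E u) _
        _ = ∑' u, ((x u : ℝ≥0∞)) ^ 2 := by simp
    have hfin : (∑' u, ((x u : ℝ≥0∞)) ^ 2) ≠ ⊤ := by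
      have : ∑' u, ((x u : ℝ≥0∞)) ^ 2 = ∑' u, (((x u) ^ 2 : ℝ≥0) : ℝ≥0∞) :=
        tsum_congr fun u => (hcoe_sq _).symm
      rw [this]
      exact ENNReal.tsum_coe_ne_top_iff_summable.2 hx2
    exact ne_top_of_le_ne_top hfin hcalc
  -- fiberwise summability
  have hfiber : ∀ r : G, Summable fun i => (a i (σ i * r) * x (σ i * r)) ^ 2 := by
    intro r
    rw [← ENNReal.tsum_coe_ne_top_iff_summable]
    have hle : (∑' i, (((a i (σ i * r) * x (σ i * r)) ^ 2 : ℝ≥0) : ℝ≥0∞)) ≤ T := by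
      have : (∑' i, (((a i (σ i * r) * x (σ i * r)) ^ 2 : ℝ≥0) : ℝ≥0∞))
          = ∑' (i : I), ((a i (σ i * r) * x (σ i * r) : ℝ≥0) : ℝ≥0∞) ^ 2 :=
        tsum_congr fun i => hcoe_sq _
      rw [this, hT]
      exact ENNReal.le_tsum r
    exact ne_top_of_le_ne_top hTtop hle
  -- the ℝ≥0-valued dominating function
  set B : G → ℝ≥0 := fun r => ∑' i, a i r * (a i (σ i * r) * x (σ i * r)) with hB
  have hconj : Real.HolderConjugate 2 2 := ⟨by norm_num, by norm_num, by norm_num⟩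
  have hrpow : ∀ (y : ℝ≥0), y ^ (2 : ℝ) = y ^ 2 := by
    intro y
    rw [← NNReal.rpow_natCast y 2]
    norm_num
  have hCS : ∀ r : G, (Summable fun i => a i r * (a i (σ i * r) * x (σ i * r))) ∧
      B r ≤ (∑' i, (a i r) ^ 2) ^ ((1 : ℝ) / 2)
        * (∑' i, (a i (σ i * r) * x (σ i * r)) ^ 2) ^ ((1 : ℝ) / 2) := by
    intro r
    have h := NNReal.summable_and_inner_le_Lp_mul_Lq_tsum (f := fun i => a i r)
      (g := fun i => a i (σ i * r) * x (σ i * r)) hconj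
      (by simpa only [hrpow] using ha2 r) (by simpa only [hrpow] using hfiber r)
    refine ⟨h.1, ?_⟩
    simpa only [hrpow] using h.2
  have hBsq : ∀ r : G, (B r) ^ 2 ≤ ∑' i, (a i (σ i * r) * x (σ i * r)) ^ 2 := by
    intro r
    have h1 : (∑' i, (a i r) ^ 2) ^ ((1 : ℝ) / 2) ≤ 1 := by
      apply NNReal.rpow_le_one (ha2sum r)
      norm_num
    have h2 : B r ≤ (∑' i, (a i (σ i * r) * x (σ i * r)) ^ 2) ^ ((1 : ℝ) / 2) := by
      refine (hCS r).2.trans ?_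
      calc (∑' i, (a i r) ^ 2) ^ ((1 : ℝ) / 2)
            * (∑' i, (a i (σ i * r) * x (σ i * r)) ^ 2) ^ ((1 : ℝ) / 2)
          ≤ 1 * (∑' i, (a i (σ i * r) * x (σ i * r)) ^ 2) ^ ((1 : ℝ) / 2) :=
            mul_le_mul_of_nonneg_right h1 zero_le
        _ = _ := one_mul _
    calc (B r) ^ 2 ≤ ((∑' i, (a i (σ i * r) * x (σ i * r)) ^ 2) ^ ((1 : ℝ) / 2)) ^ 2 :=
          pow_le_pow_left₀ zero_le h2 2
      _ = ∑' i, (a i (σ i * r) * x (σ i * r)) ^ 2 := by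
          rw [← NNReal.rpow_natCast
            ((∑' i, (a i (σ i * r) * x (σ i * r)) ^ 2) ^ ((1 : ℝ) / 2)) 2,
            ← NNReal.rpow_mul]
          norm_num
  -- summability of (B r)^2 over r
  have hG2sum : Summable fun r => ∑' i, (a i (σ i * r) * x (σ i * r)) ^ 2 := by
    rw [← ENNReal.tsum_coe_ne_top_iff_summable]
    have : (∑' r, ((∑' i, (a i (σ i * r) * x (σ i * r)) ^ 2 : ℝ≥0) : ℝ≥0∞)) = T := by
      refine tsum_congr fun r => ?_
      rw [ENNReal.coe_tsum (hfiber r)]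
      exact tsum_congr fun i => hcoe_sq _
    rw [this]
    exact hTtop
  have hB2 : Summable fun r => (B r) ^ 2 :=
    NNReal.summable_of_le hBsq hG2sum
  have hB2R : Summable fun r => ((B r : ℝ)) ^ 2 := by
    rw [← NNReal.summable_coe] at hB2
    simpa only [NNReal.coe_pow] using hB2
  -- real-side identifications
  have hAsum : ∀ r : G, Summable fun i =>
      g i r * g i (σ i * r) * ‖ξ (σ i * r)‖ := by
    intro r
    have := (hCS r).1
    rw [← NNReal.summable_coe] at this
    simpa only [NNReal.coe_mul, hacoe, hxcoe, ← mul_assoc] using this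
  have hAtsum : ∀ r : G, ∑' i, g i r * g i (σ i * r) * ‖ξ (σ i * r)‖ = (B r : ℝ) := by
    intro r
    rw [hB, NNReal.coe_tsum]
    refine tsum_congr fun i => ?_
    rw [NNReal.coe_mul, NNReal.coe_mul, hacoe, hacoe, hxcoe, mul_assoc]
  -- pointwise norm bound
  have hnorm : ∀ r : G,
      ‖∑' i, (g i r : ℂ) * c i r * (g i (σ i * r) : ℂ) * ξ (σ i * r)‖
        ≤ C * (B r : ℝ) := by
    intro r
    have hterm : ∀ i, ‖(g i r : ℂ) * c i r * (g i (σ i * r) : ℂ) * ξ (σ i * r)‖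
        ≤ C * (g i r * g i (σ i * r) * ‖ξ (σ i * r)‖) := by
      intro i
      have : ‖(g i r : ℂ) * c i r * (g i (σ i * r) : ℂ) * ξ (σ i * r)‖
          = ‖c i r‖ * (g i r * g i (σ i * r) * ‖ξ (σ i * r)‖) := by
        simp only [norm_mul, Complex.norm_real, Real.norm_eq_abs,
          abs_of_nonneg (hg _ _)]
        ring
      rw [this]
      exact mul_le_mul_of_nonneg_right (hc i r)
        (mul_nonneg (mul_nonneg (hg _ _) (hg _ _)) (norm_nonneg _))
    have hsummN : Summable fun i =>
        ‖(g i r : ℂ) * c i r * (g i (σ i * r) : ℂ) * ξ (σ i * r)‖ :=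
      Summable.of_nonneg_of_le (fun i => norm_nonneg _) hterm ((hAsum r).mul_left C)
    calc ‖∑' i, (g i r : ℂ) * c i r * (g i (σ i * r) : ℂ) * ξ (σ i * r)‖
        ≤ ∑' i, ‖(g i r : ℂ) * c i r * (g i (σ i * r) : ℂ) * ξ (σ i * r)‖ :=
          norm_tsum_le_tsum_norm hsummN
      _ ≤ ∑' i, C * (g i r * g i (σ i * r) * ‖ξ (σ i * r)‖) :=
          Summable.tsum_le_tsum hterm hsummN ((hAsum r).mul_left C)
      _ = C * (B r : ℝ) := by rw [tsum_mul_left, hAtsum r]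
  have hnorm2 : ∀ r : G,
      ‖∑' i, (g i r : ℂ) * c i r * (g i (σ i * r) : ℂ) * ξ (σ i * r)‖ ^ 2
        ≤ C ^ 2 * ((B r : ℝ)) ^ 2 := by
    intro r
    calc ‖∑' i, (g i r : ℂ) * c i r * (g i (σ i * r) : ℂ) * ξ (σ i * r)‖ ^ 2
        ≤ (C * (B r : ℝ)) ^ 2 := pow_le_pow_left₀ (norm_nonneg _) (hnorm r) 2
      _ = C ^ 2 * ((B r : ℝ)) ^ 2 := by ring
  have hLsumm : Summable fun r =>
      ‖∑' i, (g i r : ℂ) * c i r * (g i (σ i * r) : ℂ) * ξ (σ i * r)‖ ^ 2 :=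
    Summable.of_nonneg_of_le (fun r => by positivity) hnorm2 (hB2R.mul_left (C ^ 2))
  -- conclude
  have hmain : ∑' r, ‖∑' i, (g i r : ℂ) * c i r * (g i (σ i * r) : ℂ) * ξ (σ i * r)‖ ^ 2
      ≤ C ^ 2 * ∑' r, ((B r : ℝ)) ^ 2 := by
    calc ∑' r, ‖∑' i, (g i r : ℂ) * c i r * (g i (σ i * r) : ℂ) * ξ (σ i * r)‖ ^ 2
        ≤ ∑' r, C ^ 2 * ((B r : ℝ)) ^ 2 :=
          Summable.tsum_le_tsum hnorm2 hLsumm (hB2R.mul_left (C ^ 2))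
      _ = C ^ 2 * ∑' r, ((B r : ℝ)) ^ 2 := tsum_mul_left
  have hRHS : (∑' r : G, (∑' i, g i r * g i (σ i * r) * ‖ξ (σ i * r)‖) ^ 2)
      = ∑' r, ((B r : ℝ)) ^ 2 := by
    refine tsum_congr fun r => ?_
    rw [hAtsum r]
  calc Real.sqrt (∑' r : G,
        ‖∑' i, (g i r : ℂ) * c i r * (g i (σ i * r) : ℂ) * ξ (σ i * r)‖ ^ 2)
      ≤ Real.sqrt (C ^ 2 * ∑' r, ((B r : ℝ)) ^ 2) := Real.sqrt_le_sqrt hmain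
    _ = C * Real.sqrt (∑' r, ((B r : ℝ)) ^ 2) := by
        rw [Real.sqrt_mul (sq_nonneg C), Real.sqrt_sq hC]
    _ = C * Real.sqrt (∑' r : G,
        (∑' i, g i r * g i (σ i * r) * ‖ξ (σ i * r)‖) ^ 2) := by rw [hRHS]
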